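/- Let K ⊆ ℝ^d be a nonempty convex set and let P : ℝ^d → ℝ^d satisfy: P(z) ∈ K and ‖P(z) − z‖ ≤ ‖y − z‖ for all z ∈ ℝ^d and all y ∈ K. Let f : ℝ^d → ℝ be differentiable, L-smooth (L > 0), with f(x) ≥ f* for all x ∈ K and ‖∇f(x)‖ ≤ L′ for all x ∈ K. Let T ≥ 1 and let (x_t), (ĝ_t), (η_t), (ξ_t) satisfy: x_1 ∈ K, 0 < η_t ≤ 1/L, ξ_t ≥ 0, ‖ĝ_t − ∇f(x_t)‖² ≤ ξ_t, and x_{t+1} = P(x_t − η_t ĝ_t) for all t. Define the gradient mapping G(x_t) = (x_t − P(x_t − η_t ∇f(x_t)))/η_t. Then min_{1 ≤ t ≤ T} ‖G(x_t)‖² ≤ ( 2·(f(x_1) − f*) + ∑_{t=1}^{T} η_t ξ_t + 2 L′ ∑_{t=1}^{T} η_t √(ξ_t) ) / ( ∑_{t=1}^{T} η_t ). -/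

import Mathlib

open InnerProductSpace

variable {F : Type*} [NormedAddCommGroup F] [InnerProductSpace ℝ F] [CompleteSpace F]

/-- Variational inequality for a metric projection onto a convex set. -/
lemma my_proj_var_ineq {K : Set F} (hK : Convex ℝ K) (P : F → F)
    (hPmem : ∀ z, P z ∈ K) (hPproj : ∀ z, ∀ y ∈ K, ‖P z - z‖ ≤ ‖y - z‖)
    (z : F) : ∀ y ∈ K, ⟪z - P z, y - P z⟫_ℝ ≤ 0 := by
  have hinf : ‖z - P z‖ = ⨅ w : K, ‖z - w‖ := by
    haveI : Nonempty K := ⟨⟨P z, hPmem z⟩⟩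
    apply le_antisymm
    · refine le_ciInf fun w => ?_
      rw [norm_sub_rev]
      calc ‖P z - z‖ ≤ ‖(w : F) - z‖ := hPproj z w w.2
        _ = ‖z - (w : F)‖ := (norm_sub_rev _ _)
    · exact ciInf_le (f := fun w : K => ‖z - (w : F)‖)
        ⟨0, Set.forall_mem_range.mpr fun _ => norm_nonneg _⟩ ⟨P z, hPmem z⟩
  exact (norm_eq_iInf_iff_real_inner_le_zero hK (hPmem z)).mp hinf

/-- Nonexpansiveness of the projection. -/
lemma my_proj_nonexp {K : Set F} (hK : Convex ℝ K) (P : F → F)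
    (hPmem : ∀ z, P z ∈ K) (hPproj : ∀ z, ∀ y ∈ K, ‖P z - z‖ ≤ ‖y - z‖)
    (u v : F) : ‖P u - P v‖ ≤ ‖u - v‖ := by
  have h1 := my_proj_var_ineq hK P hPmem hPproj u (P v) (hPmem v)
  have h2 := my_proj_var_ineq hK P hPmem hPproj v (P u) (hPmem u)
  have key : ⟪P u - P v, P u - P v⟫_ℝ ≤ ⟪u - v, P u - P v⟫_ℝ := by
    have expand : ⟪u - v, P u - P v⟫_ℝ - ⟪P u - P v, P u - P v⟫_ℝ
        = -⟪u - P u, P v - P u⟫_ℝ - ⟪v - P v, P u - P v⟫_ℝ := by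
      simp only [inner_sub_left, inner_sub_right]
      ring
    linarith
  have h3 : ‖P u - P v‖ ^ 2 ≤ ‖u - v‖ * ‖P u - P v‖ := by
    calc ‖P u - P v‖ ^ 2 = ⟪P u - P v, P u - P v⟫_ℝ := (real_inner_self_eq_norm_sq _).symm
      _ ≤ ⟪u - v, P u - P v⟫_ℝ := key
      _ ≤ ‖u - v‖ * ‖P u - P v‖ := real_inner_le_norm _ _
  rcases eq_or_lt_of_le (norm_nonneg (P u - P v)) with h | h
  · rw [← h]; exact norm_nonneg _
  · nlinarith

/-- Quadratic upper bound for an `L`-smooth function. -/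
lemma my_quad_bound (f : F → ℝ) (hdiff : Differentiable ℝ f) (L : ℝ)
    (hsmooth : ∀ x y, ‖gradient f x - gradient f y‖ ≤ L * ‖x - y‖) (x y : F) :
    f y ≤ f x + ⟪gradient f x, y - x⟫_ℝ + L / 2 * ‖y - x‖ ^ 2 := by
  set v := y - x with hv
  have hline : ∀ t : ℝ, HasDerivAt (fun t : ℝ => x + t • v) v t := by
    intro t
    simpa using ((hasDerivAt_id t).smul_const v).const_add x
  have hφ : ∀ t : ℝ, HasDerivAt (fun t : ℝ => f (x + t • v))
      ⟪gradient f (x + t • v), v⟫_ℝ t := by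
    intro t
    have h1 := ((hdiff (x + t • v)).hasGradientAt).hasFDerivAt
    have := h1.comp_hasDerivAt t (hline t)
    convert this using 1
    · rfl
    · rfl
    · rfl
    · simp
  set c := ⟪gradient f x, v⟫_ℝ with hc
  have hψ : ∀ t : ℝ, HasDerivAt (fun t : ℝ => f (x + t • v) - c * t - L * ‖v‖ ^ 2 / 2 * t ^ 2)
      (⟪gradient f (x + t • v), v⟫_ℝ - c - L * ‖v‖ ^ 2 * t) t := by
    intro t
    have h2 : HasDerivAt (fun t : ℝ => c * t) c t := by
      simpa using (hasDerivAt_id t).const_mul c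
    have h3 : HasDerivAt (fun t : ℝ => L * ‖v‖ ^ 2 / 2 * t ^ 2) (L * ‖v‖ ^ 2 * t) t := by
      have := (hasDerivAt_pow 2 t).const_mul (L * ‖v‖ ^ 2 / 2)
      convert this using 1
      · rfl
      · rfl
      · push_cast
        ring
    exact ((hφ t).sub h2).sub h3
  have hanti : AntitoneOn (fun t : ℝ => f (x + t • v) - c * t - L * ‖v‖ ^ 2 / 2 * t ^ 2)
      (Set.Icc 0 1) := by
    apply antitoneOn_of_deriv_nonpos (convex_Icc 0 1)
    · exact fun t _ => (hψ t).continuousAt.continuousWithinAt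
    · exact fun t _ => (hψ t).differentiableAt.differentiableWithinAt
    · intro t ht
      rw [interior_Icc] at ht
      rw [(hψ t).deriv]
      have hb : ⟪gradient f (x + t • v) - gradient f x, v⟫_ℝ ≤ L * t * ‖v‖ ^ 2 := by
        calc ⟪gradient f (x + t • v) - gradient f x, v⟫_ℝ
            ≤ ‖gradient f (x + t • v) - gradient f x‖ * ‖v‖ := real_inner_le_norm _ _
          _ ≤ (L * ‖(x + t • v) - x‖) * ‖v‖ := by
              have := hsmooth (x + t • v) x
              nlinarith [norm_nonneg v]
          _ = L * t * ‖v‖ ^ 2 := by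
              rw [add_sub_cancel_left, norm_smul, Real.norm_eq_abs,
                abs_of_pos ht.1]
              ring
      have hexp : ⟪gradient f (x + t • v), v⟫_ℝ - c
          = ⟪gradient f (x + t • v) - gradient f x, v⟫_ℝ := by
        rw [hc, inner_sub_left]
      linarith
  have h01 := hanti (Set.left_mem_Icc.mpr zero_le_one) (Set.right_mem_Icc.mpr zero_le_one)
    zero_le_one
  simp only [zero_smul, add_zero, one_smul] at h01
  have hy : x + v = y := by rw [hv]; abel
  rw [hy] at h01
  nlinarith [h01]

/-- Telescoping sum over `Icc 1 n`. -/
lemma my_telescope (F : ℕ → ℝ) (n : ℕ) :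
    ∑ t ∈ Finset.Icc 1 n, (F t - F (t + 1)) = F 1 - F (n + 1) := by
  induction n with
  | zero => simp
  | succ n ih =>
      rw [Finset.sum_Icc_succ_top (by omega : 1 ≤ n + 1), ih]
      ring

set_option maxHeartbeats 1000000 in
/-- Convergence of projected gradient descent with biased gradient oracles:
the minimum squared norm of the gradient mapping over the first `T` iterations is bounded
via the cumulative bias. -/
theorem biased_projected_gd_min_grad_mapping_le {d : ℕ}
    (K : Set (EuclideanSpace ℝ (Fin d))) (hKne : K.Nonempty) (hK : Convex ℝ K)
    (P : EuclideanSpace ℝ (Fin d) → EuclideanSpace ℝ (Fin d))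
    (hPmem : ∀ z, P z ∈ K)
    (hPproj : ∀ z, ∀ y ∈ K, ‖P z - z‖ ≤ ‖y - z‖)
    (f : EuclideanSpace ℝ (Fin d) → ℝ) (L : ℝ) (hL : 0 < L)
    (hdiff : Differentiable ℝ f)
    (hsmooth : ∀ x y, ‖gradient f x - gradient f y‖ ≤ L * ‖x - y‖)
    (fstar : ℝ) (hfstar : ∀ x ∈ K, fstar ≤ f x)
    (L' : ℝ) (hL' : ∀ x ∈ K, ‖gradient f x‖ ≤ L')
    (T : ℕ) (hT : 1 ≤ T)
    (x g : ℕ → EuclideanSpace ℝ (Fin d)) (η ξ : ℕ → ℝ)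
    (hx1 : x 1 ∈ K)
    (hη : ∀ t, 1 ≤ t → 0 < η t ∧ η t ≤ 1 / L)
    (hξ : ∀ t, 1 ≤ t → 0 ≤ ξ t)
    (hbias : ∀ t, 1 ≤ t → ‖g t - gradient f (x t)‖ ^ 2 ≤ ξ t)
    (hupdate : ∀ t, 1 ≤ t → x (t + 1) = P (x t - η t • g t))
    (G : ℕ → EuclideanSpace ℝ (Fin d))
    (hG : ∀ t, G t = (η t)⁻¹ • (x t - P (x t - η t • gradient f (x t)))) :
    (Finset.Icc 1 T).inf' (Finset.nonempty_Icc.mpr hT) (fun t => ‖G t‖ ^ 2) ≤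
      (2 * (f (x 1) - fstar) + ∑ t ∈ Finset.Icc 1 T, η t * ξ t
        + 2 * L' * ∑ t ∈ Finset.Icc 1 T, η t * Real.sqrt (ξ t)) /
        (∑ t ∈ Finset.Icc 1 T, η t) := by
  -- all iterates are in K
  have hxK : ∀ t, 1 ≤ t → x t ∈ K := by
    intro t ht
    induction t with
    | zero => omega
    | succ n ih =>
        rcases Nat.eq_or_lt_of_le ht with h | h
        · rw [← h]; exact hx1
        · rw [hupdate n (by omega)]; exact hPmem _
  -- per-step key inequality
  have key : ∀ t, 1 ≤ t → η t * ‖G t‖ ^ 2 ≤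
      2 * (f (x t) - f (x (t + 1))) + η t * ξ t + 2 * L' * (η t * Real.sqrt (ξ t)) := by
    intro t ht
    obtain ⟨hηpos, hηle⟩ := hη t ht
    have hLη : L * η t ≤ 1 := by
      rw [div_eq_mul_inv, one_mul] at hηle
      calc L * η t ≤ L * L⁻¹ := by nlinarith
        _ = 1 := mul_inv_cancel₀ hL.ne'
    set v := gradient f (x t) with hvdef
    set w := P (x t - η t • v) with hwdef
    have hxt : x t ∈ K := hxK t ht
    have hwK : w ∈ K := hPmem _
    have hxG : x t - w = η t • G t := by
      rw [hG t, ← hwdef, smul_smul, mul_inv_cancel₀ hηpos.ne', one_smul]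
    -- variational inequality gives ‖G t‖² ≤ ⟪v, G t⟫
    have hvar := my_proj_var_ineq hK P hPmem hPproj (x t - η t • v) (x t) hxt
    have hinner : ‖G t‖ ^ 2 ≤ ⟪v, G t⟫_ℝ := by
      have hrw : x t - η t • v - P (x t - η t • v) = η t • G t - η t • v := by
        rw [← hwdef, sub_right_comm, hxG]
      have hrw2 : x t - P (x t - η t • v) = η t • G t := by rw [← hwdef, hxG]
      rw [hrw, hrw2] at hvar
      have : ⟪η t • G t - η t • v, η t • G t⟫_ℝ
          = η t * η t * (⟪G t, G t⟫_ℝ - ⟪v, G t⟫_ℝ) := by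
        rw [inner_sub_left, real_inner_smul_left, real_inner_smul_left,
          real_inner_smul_right, real_inner_smul_right]
        ring
      rw [this] at hvar
      have h2 : ⟪G t, G t⟫_ℝ - ⟪v, G t⟫_ℝ ≤ 0 := by nlinarith [mul_pos hηpos hηpos]
      rw [← real_inner_self_eq_norm_sq]
      linarith
    -- descent step to w
    have hq1 := my_quad_bound f hdiff L hsmooth (x t) w
    have hwx : w - x t = -(η t • G t) := by rw [← hxG]; abel
    have hq1' : f w ≤ f (x t) - η t / 2 * ‖G t‖ ^ 2 := by
      rw [hwx] at hq1
      rw [inner_neg_right, real_inner_smul_right, norm_neg, norm_smul,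
        Real.norm_eq_abs, abs_of_pos hηpos, ← hvdef] at hq1
      nlinarith [mul_le_mul_of_nonneg_left hinner hηpos.le,
        mul_nonneg hηpos.le (sq_nonneg ‖G t‖), sq_nonneg ‖G t‖]
    -- bias bound
    have hξt := hξ t ht
    have he : ‖g t - v‖ ≤ Real.sqrt (ξ t) := by
      have h1 := Real.sqrt_le_sqrt (hbias t ht)
      rwa [Real.sqrt_sq (norm_nonneg _)] at h1
    -- nonexpansiveness
    have hnear : ‖x (t + 1) - w‖ ≤ η t * Real.sqrt (ξ t) := by
      rw [hupdate t ht, hwdef]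
      calc ‖P (x t - η t • g t) - P (x t - η t • v)‖
          ≤ ‖(x t - η t • g t) - (x t - η t • v)‖ :=
            my_proj_nonexp hK P hPmem hPproj _ _
        _ = ‖η t • (g t - v)‖ := by rw [show (x t - η t • g t) - (x t - η t • v)
              = -(η t • (g t - v)) by rw [smul_sub]; abel, norm_neg]
        _ = η t * ‖g t - v‖ := by rw [norm_smul, Real.norm_eq_abs, abs_of_pos hηpos]
        _ ≤ η t * Real.sqrt (ξ t) := by nlinarith
    -- descent from w to x (t+1)
    have hq2 := my_quad_bound f hdiff L hsmooth w (x (t + 1))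
    have hgw : ‖gradient f w‖ ≤ L' := hL' w hwK
    have hsqrtnn : 0 ≤ Real.sqrt (ξ t) := Real.sqrt_nonneg _
    have hq2' : f (x (t + 1)) ≤ f w + L' * (η t * Real.sqrt (ξ t)) + η t / 2 * ξ t := by
      have hip : ⟪gradient f w, x (t + 1) - w⟫_ℝ ≤ L' * (η t * Real.sqrt (ξ t)) := by
        calc ⟪gradient f w, x (t + 1) - w⟫_ℝ ≤ ‖gradient f w‖ * ‖x (t + 1) - w‖ :=
              real_inner_le_norm _ _
          _ ≤ L' * (η t * Real.sqrt (ξ t)) := by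
              have hL'nn : 0 ≤ L' := le_trans (norm_nonneg _) hgw
              nlinarith [norm_nonneg (x (t + 1) - w)]
      have hnsq : ‖x (t + 1) - w‖ ^ 2 ≤ (η t * Real.sqrt (ξ t)) ^ 2 := by
        nlinarith [norm_nonneg (x (t + 1) - w)]
      have hsq : Real.sqrt (ξ t) ^ 2 = ξ t := Real.sq_sqrt hξt
      have : L / 2 * ‖x (t + 1) - w‖ ^ 2 ≤ η t / 2 * ξ t := by
        calc L / 2 * ‖x (t + 1) - w‖ ^ 2 ≤ L / 2 * (η t * Real.sqrt (ξ t)) ^ 2 := by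
              nlinarith
          _ = (L * η t) * (η t / 2 * ξ t) := by rw [mul_pow, hsq]; ring
          _ ≤ η t / 2 * ξ t := by nlinarith [mul_nonneg hηpos.le hξt]
      linarith
    linarith
  -- sum up
  have hS : 0 < ∑ t ∈ Finset.Icc 1 T, η t :=
    Finset.sum_pos (fun t htm => (hη t (Finset.mem_Icc.mp htm).1).1)
      (Finset.nonempty_Icc.mpr hT)
  have hsum : ∑ t ∈ Finset.Icc 1 T, η t * ‖G t‖ ^ 2 ≤
      2 * (f (x 1) - fstar) + ∑ t ∈ Finset.Icc 1 T, η t * ξ t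
        + 2 * L' * ∑ t ∈ Finset.Icc 1 T, η t * Real.sqrt (ξ t) := by
    have h1 : ∑ t ∈ Finset.Icc 1 T, η t * ‖G t‖ ^ 2 ≤
        ∑ t ∈ Finset.Icc 1 T, (2 * (f (x t) - f (x (t + 1))) + η t * ξ t
          + 2 * L' * (η t * Real.sqrt (ξ t))) :=
      Finset.sum_le_sum fun t htm => key t (Finset.mem_Icc.mp htm).1
    rw [Finset.sum_add_distrib, Finset.sum_add_distrib, ← Finset.mul_sum,
      ← Finset.mul_sum, my_telescope (fun t => f (x t)) T] at h1
    have hfT : fstar ≤ f (x (T + 1)) := hfstar _ (hxK (T + 1) (by omega))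
    linarith
  set m := (Finset.Icc 1 T).inf' (Finset.nonempty_Icc.mpr hT) (fun t => ‖G t‖ ^ 2) with hm
  have hmS : m * ∑ t ∈ Finset.Icc 1 T, η t ≤ ∑ t ∈ Finset.Icc 1 T, η t * ‖G t‖ ^ 2 := by
    rw [Finset.mul_sum]
    refine Finset.sum_le_sum fun t htm => ?_
    have h1 : m ≤ ‖G t‖ ^ 2 := Finset.inf'_le _ htm
    have h2 : 0 < η t := (hη t (Finset.mem_Icc.mp htm).1).1
    nlinarith
  rw [le_div_iff₀ hS]
  linarith
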